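/- The family of elements u₁u₂⋯u_k t_w of ev₀(H⁺), indexed without repetition by pairs (u, w) where u assigns to each i ≥ 1 a finite word u_i in the two letters {x_i, y_i} with u_i empty for all but finitely many i, and w is a permutation of {1,2,…} moving only finitely many points, is a ℚ-vector-space basis of ev₀(H⁺). -/

import Mathlib

/-!
The stable limit DAHA at `h = 0`, `ev₀(H⁺)`, over `ℚ`.
Generator index `i : ℕ` represents the paper's index `i + 1 ≥ 1`.
-/

noncomputable section

/-- Generators of `ev₀(H⁺)`; index `i : ℕ` stands for the paper index `i + 1`. -/
inductive EGen : Type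
  | t : ℕ → EGen
  | x : ℕ → EGen
  | y : ℕ → EGen

open FreeAlgebra in
/-- The defining relations of `ev₀(H⁺)`. -/
inductive ERel : FreeAlgebra ℚ EGen → FreeAlgebra ℚ EGen → Prop
  | tt (i : ℕ) : ERel (ι ℚ (EGen.t i) * ι ℚ (EGen.t i)) 1
  | tcomm (i j : ℕ) (hij : i + 1 < j ∨ j + 1 < i) :
      ERel (ι ℚ (EGen.t i) * ι ℚ (EGen.t j)) (ι ℚ (EGen.t j) * ι ℚ (EGen.t i))
  | braid (i : ℕ) :
      ERel (ι ℚ (EGen.t i) * ι ℚ (EGen.t (i + 1)) * ι ℚ (EGen.t i))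
        (ι ℚ (EGen.t (i + 1)) * ι ℚ (EGen.t i) * ι ℚ (EGen.t (i + 1)))
  | txt (i : ℕ) :
      ERel (ι ℚ (EGen.t i) * ι ℚ (EGen.x i) * ι ℚ (EGen.t i)) (ι ℚ (EGen.x (i + 1)))
  | tx (i j : ℕ) (h1 : j ≠ i) (h2 : j ≠ i + 1) :
      ERel (ι ℚ (EGen.t i) * ι ℚ (EGen.x j)) (ι ℚ (EGen.x j) * ι ℚ (EGen.t i))
  | xx (i j : ℕ) :
      ERel (ι ℚ (EGen.x i) * ι ℚ (EGen.x j)) (ι ℚ (EGen.x j) * ι ℚ (EGen.x i))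
  | tyt (i : ℕ) :
      ERel (ι ℚ (EGen.t i) * ι ℚ (EGen.y i) * ι ℚ (EGen.t i)) (ι ℚ (EGen.y (i + 1)))
  | ty (i j : ℕ) (h1 : j ≠ i) (h2 : j ≠ i + 1) :
      ERel (ι ℚ (EGen.t i) * ι ℚ (EGen.y j)) (ι ℚ (EGen.y j) * ι ℚ (EGen.t i))
  | yy (i j : ℕ) :
      ERel (ι ℚ (EGen.y i) * ι ℚ (EGen.y j)) (ι ℚ (EGen.y j) * ι ℚ (EGen.y i))
  | cross :
      ERel (ι ℚ (EGen.y 0) * ι ℚ (EGen.t 0) * ι ℚ (EGen.x 0))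
        (ι ℚ (EGen.x 1) * ι ℚ (EGen.y 0) * ι ℚ (EGen.t 0))

/-- The stable limit DAHA at `h = 0`. -/
abbrev Ev0H : Type := RingQuot ERel

/-- The image in `ev₀(H⁺)` of a generator. -/
def egen (g : EGen) : Ev0H := RingQuot.mkAlgHom ℚ ERel (FreeAlgebra.ι ℚ g)

/-- A letter of the two-letter alphabet `{x_i, y_i}`: `true ↦ x_i`, `false ↦ y_i`. -/
def eletterElem (i : ℕ) (b : Bool) : Ev0H := if b then egen (EGen.x i) else egen (EGen.y i)

/-- The element of `ev₀(H⁺)` corresponding to a word `u` in the alphabet `{x_i, y_i}`. -/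
def ewordElem (i : ℕ) (u : List Bool) : Ev0H := (u.map (eletterElem i)).prod

/-- Permutations of `{1, 2, …}` (realized as `ℕ`) moving only finitely many points. -/
def FinPerm : Type := {w : Equiv.Perm ℕ // {i | w i ≠ i}.Finite}

/-- The adjacent transposition `s_i = (i, i+1)`. -/
def swapAdj (i : ℕ) : Equiv.Perm ℕ := Equiv.swap i (i + 1)

/-- The permutation `s_{i₁} ⋯ s_{i_ℓ}` represented by a list of indices. -/
def wordPerm (l : List ℕ) : Equiv.Perm ℕ := (l.map swapAdj).prod

/-- The element `t_{i₁} ⋯ t_{i_ℓ}` of `ev₀(H⁺)` attached to a list of indices. -/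
def tword (l : List ℕ) : Ev0H := (l.map (fun i => egen (EGen.t i))).prod

instance : Zero (List Bool) := ⟨[]⟩

/-- The ordered product `u₁ u₂ ⋯ u_k` in `ev₀(H⁺)`. -/
def uProd (u : ℕ →₀ List Bool) (k : ℕ) : Ev0H :=
  ((List.range k).map (fun i => ewordElem i (u i))).prod

/-- The element `u₁ u₂ ⋯ u_k t_w` of `ev₀(H⁺)` attached to the pair `(u, w)`, where `t_w` is
taken along the chosen expression `rep w` of `w` as a product of adjacent transpositions. -/
def stdWord0 (rep : FinPerm → List ℕ) (u : ℕ →₀ List Bool) (w : FinPerm) : Ev0H :=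
  uProd u (u.support.sup id + 1) * tword (rep w)


set_option linter.unusedSectionVars false

namespace CoxAux

open Equiv List

lemma wordPerm_nil : wordPerm [] = 1 := rfl

lemma wordPerm_cons (i : ℕ) (l : List ℕ) : wordPerm (i :: l) = swapAdj i * wordPerm l := by
  simp [wordPerm]

lemma wordPerm_append (l₁ l₂ : List ℕ) :
    wordPerm (l₁ ++ l₂) = wordPerm l₁ * wordPerm l₂ := by
  simp [wordPerm]

lemma wordPerm_singleton (i : ℕ) : wordPerm [i] = swapAdj i := by
  simp [wordPerm]

lemma swapAdj_apply (i k : ℕ) :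
    swapAdj i k = if k = i then i + 1 else if k = i + 1 then i else k := by
  simp [swapAdj, Equiv.swap_apply_def]

/-- The cycle `a ↦ a+1 ↦ ⋯ ↦ n`, `n ↦ a`... as a product of adjacent swaps. -/
def cyc (a n : ℕ) : Equiv.Perm ℕ := wordPerm (List.range' a (n - a))

lemma cyc_of_ge {a n : ℕ} (h : n ≤ a) : cyc a n = 1 := by
  unfold cyc
  rw [Nat.sub_eq_zero_of_le h]
  rfl

lemma cyc_concat {a n : ℕ} (h : a ≤ n) : cyc a (n + 1) = cyc a n * swapAdj n := by
  unfold cyc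
  rw [show n + 1 - a = (n - a) + 1 by omega, List.range'_concat,
    show a + 1 * (n - a) = n by omega, wordPerm_append, wordPerm_singleton]

lemma cyc_apply {a n : ℕ} (h : a ≤ n) (k : ℕ) :
    cyc a n k = if k = n then a else if a ≤ k ∧ k < n then k + 1 else k := by
  induction n generalizing k with
  | zero =>
    have ha : a = 0 := by omega
    subst ha
    rw [cyc_of_ge (le_refl 0)]
    simp only [Equiv.Perm.one_apply]
    split_ifs <;> omega
  | succ n ih =>
    rcases Nat.lt_or_ge n a with hlt | hge
    · have ha : a = n + 1 := by omega
      subst ha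
      rw [cyc_of_ge (le_refl (n+1))]
      simp only [Equiv.Perm.one_apply]
      split_ifs <;> omega
    · rw [cyc_concat hge, Equiv.Perm.mul_apply, swapAdj_apply]
      by_cases h1 : k = n
      · subst h1
        rw [if_pos rfl, ih hge]
        split_ifs <;> omega
      · by_cases h2 : k = n + 1
        · subst h2
          rw [if_neg (by omega), if_pos rfl, ih hge]
          split_ifs <;> omega
        · rw [if_neg h1, if_neg h2, ih hge]
          split_ifs <;> omega

lemma cyc_inv_apply {a n : ℕ} (h : a ≤ n) (k : ℕ) :
    (cyc a n)⁻¹ k = if k = a then n else if a < k ∧ k ≤ n then k - 1 else k := by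
  apply (cyc a n).injective
  rw [← Equiv.Perm.mul_apply, mul_inv_cancel, Equiv.Perm.one_apply, cyc_apply h]
  split_ifs <;> omega

/-- The key permutation identity behind the exchange argument. -/
lemma pid {j j2 m : ℕ} (hne : j ≠ j2) (hj : j ≤ m + 1) (hj2 : j2 ≤ m + 1) :
    Equiv.swap j2 j * cyc j (m + 1) * cyc (if j < j2 then j2 - 1 else j2) m
      = cyc j2 (m + 1) * cyc (if j < j2 then j else j - 1) m := by
  rcases Nat.lt_or_ge j j2 with hlt | hge
  · rw [if_pos hlt, if_pos hlt]
    ext x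
    simp only [Equiv.Perm.mul_apply]
    rw [cyc_apply (show j2 - 1 ≤ m by omega), cyc_apply (show j ≤ m + 1 by omega),
      cyc_apply (show j ≤ m by omega), cyc_apply (show j2 ≤ m + 1 by omega),
      Equiv.swap_apply_def]
    split_ifs <;> omega
  · have hgt : j2 < j := by omega
    rw [if_neg (by omega), if_neg (by omega)]
    ext x
    simp only [Equiv.Perm.mul_apply]
    rw [cyc_apply (show j2 ≤ m by omega), cyc_apply (show j ≤ m + 1 by omega),
      cyc_apply (show j - 1 ≤ m by omega), cyc_apply (show j2 ≤ m + 1 by omega),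
      Equiv.swap_apply_def]
    split_ifs <;> omega

section MonoidPart

variable {M : Type*} [Monoid M] (f : ℕ → M)

/-- Product of the images of the letters of a word. -/
def Gw (l : List ℕ) : M := (l.map f).prod

lemma Gw_nil : Gw f [] = 1 := rfl

lemma Gw_cons (i : ℕ) (l : List ℕ) : Gw f (i :: l) = f i * Gw f l := by simp [Gw]

lemma Gw_append (l₁ l₂ : List ℕ) : Gw f (l₁ ++ l₂) = Gw f l₁ * Gw f l₂ := by simp [Gw]

lemma Gw_concat (l : List ℕ) (i : ℕ) : Gw f (l ++ [i]) = Gw f l * f i := by simp [Gw]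

/-- `f a * f (a+1) * ⋯ * f (n-1)`. -/
def Ew (a n : ℕ) : M := Gw f (List.range' a (n - a))

lemma Ew_of_ge {a n : ℕ} (h : n ≤ a) : Ew f a n = 1 := by
  unfold Ew
  rw [Nat.sub_eq_zero_of_le h]
  rfl

lemma Ew_concat {a n : ℕ} (h : a ≤ n) : Ew f a (n + 1) = Ew f a n * f n := by
  unfold Ew
  rw [show n + 1 - a = (n - a) + 1 by omega, List.range'_concat,
    show a + 1 * (n - a) = n by omega, Gw_append]
  simp [Gw]

lemma Ew_single (a : ℕ) : Ew f a (a + 1) = f a := by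
  unfold Ew
  rw [show a + 1 - a = 1 by omega]
  simp [Gw]

lemma Ew_cons {a n : ℕ} (h : a < n) : Ew f a n = f a * Ew f (a + 1) n := by
  unfold Ew
  rw [show n - a = (n - (a + 1)) + 1 by omega, List.range'_succ, Gw_cons]

lemma Ew_split {a b n : ℕ} (hab : a ≤ b) (hbn : b ≤ n) :
    Ew f a n = Ew f a b * Ew f b n := by
  unfold Ew
  rw [← Gw_append]
  congr 1
  have h := List.range'_append (s := a) (m := b - a) (n := n - b) (step := 1)
  rw [show a + 1 * (b - a) = b by omega, show b - a + (n - b) = n - a by omega] at h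
  exact h.symm

lemma Ew_concatX {a n : ℕ} (h : a ≤ n) (Z : M) :
    Ew f a n * (f n * Z) = Ew f a (n + 1) * Z := by
  rw [Ew_concat f h, mul_assoc]

lemma Ew_consX {a n : ℕ} (h : a < n) (Z : M) :
    Ew f a n * Z = f a * (Ew f (a + 1) n * Z) := by
  rw [Ew_cons f h, mul_assoc]

lemma Ew_splitX {a b n : ℕ} (hab : a ≤ b) (hbn : b ≤ n) (Z : M) :
    Ew f a n * Z = Ew f a b * (Ew f b n * Z) := by
  rw [Ew_split f hab hbn, mul_assoc]

variable (hsq : ∀ i, f i * f i = 1)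
  (hcm : ∀ i j, i + 2 ≤ j → f i * f j = f j * f i)
  (hbr : ∀ i, f i * f (i+1) * f i = f (i+1) * f i * f (i+1))

section WithRels

include hsq hcm hbr

lemma hsqX (i : ℕ) (X : M) : f i * (f i * X) = X := by
  rw [← mul_assoc, hsq, one_mul]

lemma hbrX (i : ℕ) (X : M) :
    f i * (f (i+1) * (f i * X)) = f (i+1) * (f i * (f (i+1) * X)) := by
  rw [← mul_assoc, ← mul_assoc, hbr, mul_assoc, mul_assoc]

lemma hcmX {k i : ℕ} (h : k + 2 ≤ i) (X : M) : f k * (f i * X) = f i * (f k * X) := by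
  rw [← mul_assoc, hcm k i h, mul_assoc]

/-- `f i` moves across a block of letters all `≤ i - 2`. -/
lemma comm_fGX {i : ℕ} {l : List ℕ} (h : ∀ k ∈ l, k + 2 ≤ i) (X : M) :
    f i * (Gw f l * X) = Gw f l * (f i * X) := by
  induction l generalizing X with
  | nil => simp [Gw_nil]
  | cons k l ih =>
    rw [Gw_cons, mul_assoc, mul_assoc, ← hcmX f hsq hcm hbr (h k (List.mem_cons_self)),
      ih (fun k' hk' => h k' (List.mem_cons_of_mem _ hk'))]

/-- `f i` moves across a block of letters all `≥ i + 2`. -/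
lemma comm_fGX' {i : ℕ} {l : List ℕ} (h : ∀ k ∈ l, i + 2 ≤ k) (X : M) :
    f i * (Gw f l * X) = Gw f l * (f i * X) := by
  induction l generalizing X with
  | nil => simp [Gw_nil]
  | cons k l ih =>
    rw [Gw_cons, mul_assoc, mul_assoc, hcmX f hsq hcm hbr (h k (List.mem_cons_self)),
      ih (fun k' hk' => h k' (List.mem_cons_of_mem _ hk'))]

lemma comm_f_EwX {a n i : ℕ} (h : n + 1 ≤ i) (X : M) :
    f i * (Ew f a n * X) = Ew f a n * (f i * X) := by
  apply comm_fGX f hsq hcm hbr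
  intro k hk
  rw [List.mem_range'_1] at hk
  omega

/-- auxiliary braid-shuffle step. -/
lemma k1X {b m : ℕ} (h : b ≤ m) (X : M) :
    f (m+1) * (Ew f b (m+1) * (f (m+1) * X))
      = Ew f b (m+1) * (f (m+1) * (f m * X)) := by
  rw [show Ew f b (m+1) * (f (m+1) * X) = Ew f b m * (f m * (f (m+1) * X)) from
      (Ew_concatX f h _).symm,
    comm_f_EwX f hsq hcm hbr (show m + 1 ≤ m + 1 by omega),
    ← hbrX f hsq hcm hbr m X,
    show Ew f b m * (f m * (f (m+1) * (f m * X))) = Ew f b (m+1) * (f (m+1) * (f m * X)) from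
      Ew_concatX f h _]

lemma Ew_sqX : ∀ m b, b ≤ m → ∀ X : M,
    Ew f b (m+1) * (Ew f b (m+1) * X) = Ew f (b+1) (m+1) * (Ew f b m * X) := by
  intro m
  induction m with
  | zero =>
    intro b hb X
    interval_cases b
    rw [Ew_single, Ew_of_ge f (le_refl 1), Ew_of_ge f (le_refl 0), one_mul, one_mul,
      ← mul_assoc, hsq, one_mul]
  | succ m ih =>
    intro b hb X
    rcases Nat.lt_or_ge b (m+1) with hlt | hge
    · have hbm : b ≤ m := by omega
      rw [Ew_concat f (show b ≤ m + 1 by omega),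
        Ew_concat f (show b + 1 ≤ m + 1 by omega)]
      simp only [mul_assoc]
      rw [k1X f hsq hcm hbr hbm X,
        ih b hbm (f (m+1) * (f m * X)),
        ← comm_f_EwX f hsq hcm hbr (show m + 1 ≤ m + 1 by omega),
        Ew_concatX f hbm X]
    · have hb1 : b = m + 1 := by omega
      subst hb1
      rw [Ew_single, Ew_of_ge f (le_refl (m+2)), Ew_of_ge f (le_refl (m+1)), one_mul,
        one_mul, ← mul_assoc, hsq, one_mul]


lemma c2bX : ∀ m b, b ≤ m → ∀ X : M,
    Ew f (b+1) (m+1) * (Ew f b (m+1) * X) = Ew f b (m+1) * (Ew f b m * X) := by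
  intro m
  induction m with
  | zero =>
    intro b hb X
    interval_cases b
    rw [Ew_single, Ew_of_ge f (le_refl 1), Ew_of_ge f (le_refl 0)]
    simp
  | succ m ih =>
    intro b hb X
    rcases Nat.lt_or_ge b (m+1) with hlt | hge
    · have hbm : b ≤ m := by omega
      rw [Ew_concat f (show b ≤ m + 1 by omega),
        Ew_concat f (show b + 1 ≤ m + 1 by omega)]
      simp only [mul_assoc]
      rw [k1X f hsq hcm hbr hbm X,
        ih b hbm (f (m+1) * (f m * X)),
        ← comm_f_EwX f hsq hcm hbr (show m + 1 ≤ m + 1 by omega),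
        Ew_concatX f hbm X]
    · have hb1 : b = m + 1 := by omega
      subst hb1
      rw [Ew_single, Ew_of_ge f (le_refl (m+2)), Ew_of_ge f (le_refl (m+1))]
      simp

lemma comm_f_EwX' {a n i : ℕ} (h : i + 2 ≤ a) (X : M) :
    f i * (Ew f a n * X) = Ew f a n * (f i * X) := by
  apply comm_fGX' f hsq hcm hbr
  intro k hk
  rw [List.mem_range'_1] at hk
  omega

lemma comm_GGX {l l' : List ℕ} (h : ∀ k ∈ l, ∀ k' ∈ l', k + 2 ≤ k') (Z : M) :
    Gw f l * (Gw f l' * Z) = Gw f l' * (Gw f l * Z) := by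
  induction l generalizing Z with
  | nil => simp [Gw_nil]
  | cons k l ih =>
    rw [Gw_cons, mul_assoc, mul_assoc,
      ih (fun k' hk' => h k' (List.mem_cons_of_mem _ hk')),
      comm_fGX' f hsq hcm hbr (fun k' hk' => h k (List.mem_cons_self) k' hk')]

lemma comm_Ew_EwX {a n a' n' : ℕ} (h : n + 1 ≤ a') (Z : M) :
    Ew f a n * (Ew f a' n' * Z) = Ew f a' n' * (Ew f a n * Z) := by
  apply comm_GGX f hsq hcm hbr
  intro k hk k' hk'
  rw [List.mem_range'_1] at hk hk'
  omega

lemma c2X : ∀ d b m, b + d + 1 ≤ m + 1 → ∀ X : M,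
    Ew f (b+d+1) (m+1) * (Ew f b (m+1) * X) = Ew f b (m+1) * (Ew f (b+d) m * X) := by
  intro d
  induction d with
  | zero => intro b m h X; exact c2bX f hsq hcm hbr m b (by omega) X
  | succ d ih =>
    intro b m h X
    rw [Ew_consX f (show b < m + 1 by omega) X,
      ← comm_f_EwX' f hsq hcm hbr (show b + 2 ≤ b + (d+1) + 1 by omega),
      show b + (d+1) + 1 = (b+1) + d + 1 by omega,
      ih (b+1) m (by omega) X,
      ← Ew_consX f (show b < m + 1 by omega),
      show b + 1 + d = b + (d + 1) by omega]

lemma c1X {a b m : ℕ} (hab : a ≤ b) (hbm : b ≤ m) (X : M) :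
    Ew f a (m+1) * (Ew f b (m+1) * X) = Ew f (b+1) (m+1) * (Ew f a m * X) := by
  rw [Ew_splitX f hab (show b ≤ m + 1 by omega),
    Ew_sqX f hsq hcm hbr m b hbm X,
    comm_Ew_EwX f hsq hcm hbr (show b + 1 ≤ b + 1 by omega),
    ← Ew_splitX f hab hbm]

end WithRels

/-- canonical-form recursion for finitary permutations. -/
def Fc : ℕ → Equiv.Perm ℕ → M
  | 0, _ => 1
  | (n+1), w => Ew f (w n) n * Fc n ((cyc (w n) n)⁻¹ * w)

lemma Fc_succ (n : ℕ) (w : Equiv.Perm ℕ) :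
    Fc f (n+1) w = Ew f (w n) n * Fc f n ((cyc (w n) n)⁻¹ * w) := rfl

lemma Fc_letters : ∀ n (w : Equiv.Perm ℕ), ∃ l : List ℕ,
    (∀ k ∈ l, k + 2 ≤ n) ∧ Fc f n w = Gw f l := by
  intro n
  induction n with
  | zero => exact fun w => ⟨[], by simp, rfl⟩
  | succ n ih =>
    intro w
    obtain ⟨l, hl, e⟩ := ih ((cyc (w n) n)⁻¹ * w)
    refine ⟨List.range' (w n) (n - w n) ++ l, ?_, ?_⟩
    · intro k hk
      rcases List.mem_append.mp hk with hk | hk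
      · rw [List.mem_range'_1] at hk; omega
      · have := hl k hk; omega
    · rw [Fc_succ, e, Gw_append]
      rfl

lemma fix_lt {n : ℕ} (w : Equiv.Perm ℕ) (hw : ∀ k, n ≤ k → w k = k)
    {m : ℕ} (hm : m < n) : w m < n := by
  by_contra hcon
  push_neg at hcon
  have h3 : w (w m) = w m := hw _ hcon
  have h4 : w m = m := w.injective h3
  omega

lemma fix_step {n : ℕ} (w : Equiv.Perm ℕ) (hw : ∀ k, n + 1 ≤ k → w k = k) :
    ∀ k, n ≤ k → ((cyc (w n) n)⁻¹ * w) k = k := by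
  have hwn : w n ≤ n := by
    have := fix_lt w hw (show n < n + 1 by omega); omega
  intro k hk
  rcases eq_or_lt_of_le hk with hk1 | hk1
  · rw [← hk1, Equiv.Perm.mul_apply, cyc_inv_apply hwn, if_pos rfl]
  · rw [Equiv.Perm.mul_apply, hw k (by omega), cyc_inv_apply hwn]
    split_ifs <;> omega

section WithRels2

include hsq hcm hbr

lemma Fc_commX {n i : ℕ} (h : n ≤ i) (w : Equiv.Perm ℕ) (X : M) :
    f i * (Fc f n w * X) = Fc f n w * (f i * X) := by
  obtain ⟨l, hl, e⟩ := Fc_letters f n w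
  rw [e]
  exact comm_fGX f hsq hcm hbr (fun k hk => by have := hl k hk; omega) X

lemma Fc_mulX : ∀ n (w : Equiv.Perm ℕ), (∀ k, n ≤ k → w k = k) → ∀ i, i + 2 ≤ n → ∀ X : M,
    Fc f n w * (f i * X) = Fc f n (w * swapAdj i) * X := by
  intro n
  induction n with
  | zero => intro w hw i hi; omega
  | succ n ih =>
    intro w hw i hi X
    have hw' := fix_step w hw
    rcases Nat.lt_or_ge (i+2) (n+1) with hlt | hge
    · -- easy case
      have hi2 : i + 2 ≤ n := by omega
      have hsn : (w * swapAdj i) n = w n := by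
        rw [Equiv.Perm.mul_apply, swapAdj_apply, if_neg (by omega), if_neg (by omega)]
      rw [Fc_succ, Fc_succ, hsn]
      simp only [mul_assoc]
      rw [ih ((cyc (w n) n)⁻¹ * w) hw' i hi2 X,
        mul_assoc ((cyc (w n) n)⁻¹) w (swapAdj i)]
    · -- hard case : n = i + 1
      have hn : n = i + 1 := by omega
      subst hn
      have hj : w (i+1) ≤ i + 1 := by
        have := fix_lt w hw (show i + 1 < i + 2 by omega); omega
      set j := w (i+1) with hj_def
      set w' := (cyc j (i+1))⁻¹ * w with hw'_def
      have hw'fix : ∀ k, i + 1 ≤ k → w' k = k := hw'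
      have hj2 : w i ≤ i + 1 := by
        have := fix_lt w hw (show i < i + 2 by omega); omega
      set j2 := w i with hj2_def
      have hne : j ≠ j2 := by
        intro hcon
        rw [hj_def, hj2_def] at hcon
        have := w.injective hcon
        omega
      set j3 := w' i with hj3_def
      have hj3 : j3 ≤ i := by
        have := fix_lt w' hw'fix (show i < i + 1 by omega); omega
      have hj3val : j3 = if j < j2 then j2 - 1 else j2 := by
        rw [hj3_def, hw'_def, Equiv.Perm.mul_apply, ← hj2_def, cyc_inv_apply hj]
        split_ifs <;> omega
      set v := w * swapAdj i with hv_def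
      have hv1 : v (i+1) = j2 := by
        rw [hv_def, Equiv.Perm.mul_apply, swapAdj_apply, if_neg (by omega), if_pos rfl,
          ← hj2_def]
      have hvfix : ∀ k, i + 2 ≤ k → v k = k := by
        intro k hk
        rw [hv_def, Equiv.Perm.mul_apply, swapAdj_apply, if_neg (by omega),
          if_neg (by omega)]
        exact hw k hk
      have hv'pre := fix_step v hvfix
      rw [hv1] at hv'pre
      set v' := (cyc j2 (i+1))⁻¹ * v with hv'_def
      have hv'fix : ∀ k, i + 1 ≤ k → v' k = k := hv'pre
      have hvi : v i = j := by
        rw [hv_def, Equiv.Perm.mul_apply, swapAdj_apply, if_pos rfl, ← hj_def]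
      set j4 := v' i with hj4_def
      have hj4val : j4 = if j < j2 then j else j - 1 := by
        rw [hj4_def, hv'_def, Equiv.Perm.mul_apply, hvi, cyc_inv_apply hj2]
        split_ifs <;> omega
      have hj4 : j4 ≤ i := by
        have := fix_lt v' hv'fix (show i < i + 1 by omega); omega
      have hperm : Equiv.swap j2 j * cyc j (i+1) * cyc j3 i = cyc j2 (i+1) * cyc j4 i := by
        rw [hj3val, hj4val]
        exact pid hne hj hj2
      have hsw : w * swapAdj i = Equiv.swap j2 j * w := by
        rw [show swapAdj i = Equiv.swap i (i+1) from rfl, Equiv.mul_swap_eq_swap_mul,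
          ← hj2_def, ← hj_def]
      have e9 : ∀ (α β σ : Equiv.Perm ℕ), α⁻¹ * (β⁻¹ * σ) = (β * α)⁻¹ * σ := by
        intro α β σ
        rw [mul_inv_rev, mul_assoc]
      have hww : (cyc j3 i)⁻¹ * w' = (cyc j4 i)⁻¹ * v' := by
        rw [hw'_def, hv'_def, hv_def, hsw, e9, e9, ← hperm]
        simp [mul_inv_rev, mul_assoc]
      have expand : ∀ (σ : Equiv.Perm ℕ) (Y : M), Fc f (i+2) σ * Y
          = Ew f (σ (i+1)) (i+1) * (Ew f (((cyc (σ (i+1)) (i+1))⁻¹ * σ) i) i *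
              (Fc f i ((cyc (((cyc (σ (i+1)) (i+1))⁻¹ * σ) i) i)⁻¹ *
                ((cyc (σ (i+1)) (i+1))⁻¹ * σ)) * Y)) := by
        intro σ Y
        rw [Fc_succ, Fc_succ, mul_assoc, mul_assoc]
      rw [expand w (f i * X), expand v X, ← hj_def, ← hw'_def, ← hj3_def, hv1,
        ← hv'_def, ← hj4_def, hww,
        ← Fc_commX f hsq hcm hbr (le_refl i),
        Ew_concatX f hj3]
      rcases Nat.lt_or_ge j j2 with hlt2 | hgt2
      · have h3 : j3 = j2 - 1 := by rw [hj3val, if_pos hlt2]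
        have h4 : j4 = j := by rw [hj4val, if_pos hlt2]
        rw [h3, h4, c1X f hsq hcm hbr (show j ≤ j2 - 1 by omega) (show j2 - 1 ≤ i by omega),
          show j2 - 1 + 1 = j2 by omega]
      · have hgt : j2 < j := by omega
        have h3 : j3 = j2 := by rw [hj3val, if_neg (by omega)]
        have h4 : j4 = j - 1 := by rw [hj4val, if_neg (by omega)]
        rw [h3, h4]
        have hc := c2X f hsq hcm hbr (j - j2 - 1) j2 i (by omega)
          (Fc f i ((cyc (j - 1) i)⁻¹ * v') * X)
        rw [show j2 + (j - j2 - 1) + 1 = j by omega,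
          show j2 + (j - j2 - 1) = j - 1 by omega] at hc
        rw [hc]

end WithRels2

lemma Fc_one : ∀ n, Fc f n 1 = 1 := by
  intro n
  induction n with
  | zero => rfl
  | succ n ih =>
    rw [Fc_succ]
    simp only [Equiv.Perm.one_apply]
    rw [Ew_of_ge f (le_refl n), cyc_of_ge (le_refl n), one_mul, inv_one, one_mul, ih]

lemma wordPerm_fix {n : ℕ} (l : List ℕ) (hl : ∀ m ∈ l, m + 2 ≤ n) :
    ∀ k, n ≤ k → wordPerm l k = k := by
  induction l with
  | nil => intro k hk; rfl
  | cons i l ih =>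
    intro k hk
    rw [wordPerm_cons, Equiv.Perm.mul_apply,
      ih (fun m hm => hl m (List.mem_cons_of_mem _ hm)) k hk, swapAdj_apply]
    have := hl i (List.mem_cons_self)
    split_ifs <;> omega

lemma le_foldr_max : ∀ (L : List ℕ) (k : ℕ), k ∈ L → k ≤ L.foldr max 0 := by
  intro L
  induction L with
  | nil => intro k hk; cases hk
  | cons a L ih =>
    intro k hk
    rcases List.mem_cons.mp hk with h | h
    · subst h; exact le_max_left _ _
    · exact le_trans (ih k h) (le_max_right _ _)

section WithRels3

include hsq hcm hbr

lemma Gw_eq_Fc (l : List ℕ) (n : ℕ) (hl : ∀ k ∈ l, k + 2 ≤ n) :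
    Gw f l = Fc f n (wordPerm l) := by
  induction l using List.reverseRecOn with
  | nil => rw [wordPerm_nil, Fc_one, Gw_nil]
  | append_singleton l i ih =>
    have hl' : ∀ k ∈ l, k + 2 ≤ n := fun k hk => hl k (List.mem_append_left _ hk)
    have hi : i + 2 ≤ n := hl i (List.mem_append_right _ (List.mem_cons_self))
    rw [Gw_concat, ih hl', wordPerm_append, wordPerm_singleton]
    have := Fc_mulX f hsq hcm hbr n (wordPerm l) (wordPerm_fix l hl') i hi 1
    rw [mul_one, mul_one] at this
    exact this

theorem Gw_eq_of_wordPerm_eq {l l' : List ℕ} (h : wordPerm l = wordPerm l') :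
    Gw f l = Gw f l' := by
  set n := (l ++ l').foldr max 0 + 2 with hn
  have hb : ∀ k ∈ l ++ l', k + 2 ≤ n := by
    intro k hk
    have := le_foldr_max (l ++ l') k hk
    omega
  rw [Gw_eq_Fc f hsq hcm hbr l n (fun k hk => hb k (List.mem_append_left _ hk)),
    Gw_eq_Fc f hsq hcm hbr l' n (fun k hk => hb k (List.mem_append_right _ hk)), h]

end WithRels3

end MonoidPart


end CoxAux


namespace Ev0Span

open CoxAux

noncomputable def eT (i : ℕ) : Ev0H := egen (EGen.t i)
noncomputable def eX (i : ℕ) : Ev0H := egen (EGen.x i)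
noncomputable def eY (i : ℕ) : Ev0H := egen (EGen.y i)

lemma mk_rel {a b : FreeAlgebra ℚ EGen} (h : ERel a b) :
    RingQuot.mkAlgHom ℚ ERel a = RingQuot.mkAlgHom ℚ ERel b := RingQuot.mkAlgHom_rel ℚ h

lemma r_tt (i : ℕ) : eT i * eT i = 1 := by
  have := mk_rel (ERel.tt i)
  simpa [eT, egen, map_mul, map_one] using this

lemma r_tcomm {i j : ℕ} (h : i + 2 ≤ j) : eT i * eT j = eT j * eT i := by
  have := mk_rel (ERel.tcomm i j (Or.inl (by omega)))
  simpa [eT, egen, map_mul] using this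

lemma r_braid (i : ℕ) : eT i * eT (i+1) * eT i = eT (i+1) * eT i * eT (i+1) := by
  have := mk_rel (ERel.braid i)
  simpa [eT, egen, map_mul] using this

lemma r_txt (i : ℕ) : eT i * eX i * eT i = eX (i+1) := by
  have := mk_rel (ERel.txt i)
  simpa [eT, eX, egen, map_mul] using this

lemma r_tx {i j : ℕ} (h1 : j ≠ i) (h2 : j ≠ i + 1) : eT i * eX j = eX j * eT i := by
  have := mk_rel (ERel.tx i j h1 h2)
  simpa [eT, eX, egen, map_mul] using this

lemma r_xx (i j : ℕ) : eX i * eX j = eX j * eX i := by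
  have := mk_rel (ERel.xx i j)
  simpa [eX, egen, map_mul] using this

lemma r_tyt (i : ℕ) : eT i * eY i * eT i = eY (i+1) := by
  have := mk_rel (ERel.tyt i)
  simpa [eT, eY, egen, map_mul] using this

lemma r_ty {i j : ℕ} (h1 : j ≠ i) (h2 : j ≠ i + 1) : eT i * eY j = eY j * eT i := by
  have := mk_rel (ERel.ty i j h1 h2)
  simpa [eT, eY, egen, map_mul] using this

lemma r_yy (i j : ℕ) : eY i * eY j = eY j * eY i := by
  have := mk_rel (ERel.yy i j)
  simpa [eY, egen, map_mul] using this

lemma r_cross : eY 0 * eT 0 * eX 0 = eX 1 * eY 0 * eT 0 := by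
  have := mk_rel ERel.cross
  simpa [eT, eX, eY, egen, map_mul] using this

lemma tword_nil : tword [] = 1 := rfl

lemma tword_cons (i : ℕ) (l : List ℕ) : tword (i :: l) = eT i * tword l := by
  simp [tword, eT]

lemma tword_append (l₁ l₂ : List ℕ) : tword (l₁ ++ l₂) = tword l₁ * tword l₂ := by
  simp [tword]

lemma tword_eq_Gw (l : List ℕ) : tword l = CoxAux.Gw eT l := rfl

/-- `t_w` only depends on the permutation `w`. -/
lemma tword_eq_of_wordPerm_eq {l l' : List ℕ} (h : wordPerm l = wordPerm l') :
    tword l = tword l' := by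
  rw [tword_eq_Gw, tword_eq_Gw]
  exact CoxAux.Gw_eq_of_wordPerm_eq eT r_tt (fun i j hij => r_tcomm hij) r_braid h

lemma t_conj_x (i j : ℕ) : eT i * eX j = eX (swapAdj i j) * eT i := by
  by_cases h1 : j = i
  · subst h1
    rw [show swapAdj j j = j + 1 by rw [swapAdj_apply, if_pos rfl]]
    have h := congrArg (· * eT j) (r_txt j)
    rw [mul_assoc (eT j * eX j), r_tt, mul_one] at h
    exact h
  · by_cases h2 : j = i + 1
    · subst h2
      rw [show swapAdj i (i+1) = i by rw [swapAdj_apply, if_neg (by omega), if_pos rfl]]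
      calc eT i * eX (i+1) = eT i * (eT i * eX i * eT i) := by rw [r_txt]
        _ = (eT i * eT i) * (eX i * eT i) := by
            rw [← mul_assoc, ← mul_assoc, mul_assoc (eT i * eT i)]
        _ = eX i * eT i := by rw [r_tt, one_mul]
    · rw [show swapAdj i j = j by rw [swapAdj_apply, if_neg h1, if_neg h2]]
      exact r_tx h1 h2

lemma t_conj_y (i j : ℕ) : eT i * eY j = eY (swapAdj i j) * eT i := by
  by_cases h1 : j = i
  · subst h1
    rw [show swapAdj j j = j + 1 by rw [swapAdj_apply, if_pos rfl]]
    have h := congrArg (· * eT j) (r_tyt j)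
    rw [mul_assoc (eT j * eY j), r_tt, mul_one] at h
    exact h
  · by_cases h2 : j = i + 1
    · subst h2
      rw [show swapAdj i (i+1) = i by rw [swapAdj_apply, if_neg (by omega), if_pos rfl]]
      calc eT i * eY (i+1) = eT i * (eT i * eY i * eT i) := by rw [r_tyt]
        _ = (eT i * eT i) * (eY i * eT i) := by
            rw [← mul_assoc, ← mul_assoc, mul_assoc (eT i * eT i)]
        _ = eY i * eT i := by rw [r_tt, one_mul]
    · rw [show swapAdj i j = j by rw [swapAdj_apply, if_neg h1, if_neg h2]]
      exact r_ty h1 h2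

lemma eletter_x (i : ℕ) : eletterElem i true = eX i := rfl

lemma eletter_y (i : ℕ) : eletterElem i false = eY i := rfl

lemma t_conj_letter (i j : ℕ) (b : Bool) :
    eT i * eletterElem j b = eletterElem (swapAdj i j) b * eT i := by
  cases b
  · rw [eletter_y, eletter_y]; exact t_conj_y i j
  · rw [eletter_x, eletter_x]; exact t_conj_x i j

lemma ewordElem_nil (i : ℕ) : ewordElem i [] = 1 := rfl

lemma ewordElem_cons (i : ℕ) (b : Bool) (v : List Bool) :
    ewordElem i (b :: v) = eletterElem i b * ewordElem i v := by
  simp [ewordElem]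

lemma t_conj_word (i j : ℕ) (v : List Bool) :
    eT i * ewordElem j v = ewordElem (swapAdj i j) v * eT i := by
  induction v with
  | nil => rw [ewordElem_nil, ewordElem_nil, mul_one, one_mul]
  | cons b v ih =>
    rw [ewordElem_cons, ewordElem_cons, ← mul_assoc, t_conj_letter, mul_assoc, ih,
      ← mul_assoc]

lemma tword_conj_letter (l : List ℕ) (j : ℕ) (b : Bool) :
    tword l * eletterElem j b = eletterElem (wordPerm l j) b * tword l := by
  induction l with
  | nil => rw [tword_nil, one_mul, wordPerm_nil, Equiv.Perm.one_apply, mul_one]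
  | cons i l ih =>
    rw [tword_cons, wordPerm_cons, mul_assoc, ih, ← mul_assoc, t_conj_letter,
      Equiv.Perm.mul_apply, mul_assoc]

lemma tword_rev_mul (l : List ℕ) : tword l.reverse * tword l = 1 := by
  induction l with
  | nil => rw [List.reverse_nil, tword_nil, mul_one]
  | cons i l ih =>
    rw [List.reverse_cons, tword_append, tword_cons, tword_nil, mul_one, tword_cons,
      mul_assoc, ← mul_assoc (eT i), r_tt, one_mul, ih]

lemma tword_mul_rev (l : List ℕ) : tword l * tword l.reverse = 1 := by
  have := tword_rev_mul l.reverse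
  rwa [List.reverse_reverse] at this

/-- Word representing the transposition `(a, a+d)`. -/
def swapList (a : ℕ) : ℕ → List ℕ
  | 0 => []
  | 1 => [a]
  | (d+2) => (a+d+1) :: (swapList a (d+1) ++ [a+d+1])

lemma swapAdj_symm (i : ℕ) : (swapAdj i).symm = swapAdj i := Equiv.symm_swap i (i+1)

lemma swapAdj_inv (i : ℕ) : (swapAdj i)⁻¹ = swapAdj i := Equiv.symm_swap i (i+1)

lemma wordPerm_swapList (a : ℕ) : ∀ d, wordPerm (swapList a d) = Equiv.swap a (a + d) := by
  intro d
  induction d with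
  | zero => rw [show swapList a 0 = [] from rfl, wordPerm_nil, Nat.add_zero, Equiv.swap_self]; rfl
  | succ d ih =>
    match d with
    | 0 => rw [show swapList a 1 = [a] from rfl, wordPerm_singleton]; rfl
    | d+1 =>
      rw [show swapList a (d+2) = (a+d+1) :: (swapList a (d+1) ++ [a+d+1]) from rfl,
        wordPerm_cons, wordPerm_append, wordPerm_singleton, ih]
      have h := Equiv.swap_apply_apply (swapAdj (a+d+1)) a (a+d+1)
      rw [show swapAdj (a+d+1) a = a by
          rw [swapAdj_apply, if_neg (by omega), if_neg (by omega)],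
        show swapAdj (a+d+1) (a+d+1) = a+d+2 by rw [swapAdj_apply, if_pos rfl],
        swapAdj_inv] at h
      rw [show a + (d + 1) = a + d + 1 by omega, show a + (d + 2) = a + d + 2 by omega, h,
        mul_assoc]

lemma xy_base : eX 1 * eY 0 = eY 0 * eX 1 := by
  have h := congrArg (· * eT 0) r_cross
  simp only [mul_assoc] at h
  rw [r_tt, mul_one] at h
  rw [show eT 0 * (eX 0 * eT 0) = eX 1 from by rw [← mul_assoc]; exact r_txt 0] at h
  exact h.symm

lemma xy_comm {i j : ℕ} (h : i ≠ j) : eX i * eY j = eY j * eX i := by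
  set k := Equiv.swap 0 j i with hk
  have hk0 : k ≠ 0 := by
    rw [hk, Equiv.swap_apply_def]
    split_ifs <;> omega
  set L := swapList 0 j ++ swapList 1 (k-1) with hL
  have hwp : wordPerm L = Equiv.swap 0 j * Equiv.swap 1 k := by
    rw [hL, wordPerm_append, wordPerm_swapList, wordPerm_swapList,
      show (1 : ℕ) + (k-1) = k by omega, Nat.zero_add]
  have h1 : wordPerm L 1 = i := by
    rw [hwp, Equiv.Perm.mul_apply, Equiv.swap_apply_left, hk, Equiv.swap_apply_self]
  have h0 : wordPerm L 0 = j := by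
    rw [hwp, Equiv.Perm.mul_apply,
      Equiv.swap_apply_of_ne_of_ne (by omega) (Ne.symm hk0), Equiv.swap_apply_left]
  have c1 : tword L * eX 1 = eX i * tword L := by
    have := tword_conj_letter L 1 true
    rw [eletter_x, eletter_x, h1] at this
    exact this
  have c2 : tword L * eY 0 = eY j * tword L := by
    have := tword_conj_letter L 0 false
    rw [eletter_y, eletter_y, h0] at this
    exact this
  have main : eX i * eY j * tword L = eY j * eX i * tword L := by
    calc eX i * eY j * tword L = eX i * (eY j * tword L) := by rw [mul_assoc]
      _ = eX i * (tword L * eY 0) := by rw [← c2]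
      _ = (eX i * tword L) * eY 0 := by rw [mul_assoc]
      _ = (tword L * eX 1) * eY 0 := by rw [← c1]
      _ = tword L * (eX 1 * eY 0) := by rw [mul_assoc]
      _ = tword L * (eY 0 * eX 1) := by rw [xy_base]
      _ = (tword L * eY 0) * eX 1 := by rw [mul_assoc]
      _ = (eY j * tword L) * eX 1 := by rw [c2]
      _ = eY j * (tword L * eX 1) := by rw [mul_assoc]
      _ = eY j * (eX i * tword L) := by rw [c1]
      _ = eY j * eX i * tword L := by rw [mul_assoc]
  have h2 := congrArg (· * tword L.reverse) main
  rw [mul_assoc (eX i * eY j), tword_mul_rev, mul_one,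
    mul_assoc (eY j * eX i), tword_mul_rev, mul_one] at h2
  exact h2

lemma letter_comm {i j : ℕ} (h : i ≠ j) (b b' : Bool) :
    eletterElem i b * eletterElem j b' = eletterElem j b' * eletterElem i b := by
  cases b <;> cases b'
  · rw [eletter_y, eletter_y]; exact r_yy i j
  · rw [eletter_y, eletter_x]; exact (xy_comm (Ne.symm h)).symm
  · rw [eletter_x, eletter_y]; exact xy_comm h
  · rw [eletter_x, eletter_x]; exact r_xx i j

lemma letter_word_comm {i j : ℕ} (h : i ≠ j) (b : Bool) (v : List Bool) :
    eletterElem i b * ewordElem j v = ewordElem j v * eletterElem i b := by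
  induction v with
  | nil => rw [ewordElem_nil, mul_one, one_mul]
  | cons b' v ih =>
    rw [ewordElem_cons, ← mul_assoc, letter_comm h, mul_assoc, ih, ← mul_assoc]

lemma word_comm {i j : ℕ} (h : i ≠ j) (v v' : List Bool) :
    ewordElem i v * ewordElem j v' = ewordElem j v' * ewordElem i v := by
  induction v with
  | nil => rw [ewordElem_nil, mul_one, one_mul]
  | cons b v ih =>
    rw [ewordElem_cons, mul_assoc, ih, ← mul_assoc, letter_word_comm h, mul_assoc]

lemma uProd_zero_len (u : ℕ →₀ List Bool) : uProd u 0 = 1 := rfl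

lemma uProd_succ (u : ℕ →₀ List Bool) (k : ℕ) :
    uProd u (k+1) = uProd u k * ewordElem k (u k) := by
  simp [uProd, List.range_succ]

lemma apply_eq_nil {u : ℕ →₀ List Bool} {m : ℕ} (h : u.support.sup id + 1 ≤ m) :
    u m = 0 := by
  by_contra h0
  have hm : m ∈ u.support := Finsupp.mem_support_iff.mpr h0
  have := Finset.le_sup (f := id) hm
  simp only [id_eq] at this
  omega

lemma ewordElem_zero (i : ℕ) : ewordElem i (0 : List Bool) = 1 := rfl

lemma uProd_extend {u : ℕ →₀ List Bool} {k K : ℕ} (hk : u.support.sup id + 1 ≤ k)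
    (hK : k ≤ K) : uProd u K = uProd u k := by
  induction K, hK using Nat.le_induction with
  | base => rfl
  | succ K hKk ih =>
    rw [uProd_succ, show u K = 0 from apply_eq_nil (by omega), ewordElem_zero, mul_one, ih]

lemma pass_prod (a : Ev0H) (g g' : ℕ → Ev0H) (hp : ∀ j, a * g j = g' j * a) :
    ∀ l : List ℕ, a * (l.map g).prod = (l.map g').prod * a := by
  intro l
  induction l with
  | nil => simp
  | cons j l ih =>
    simp only [List.map_cons, List.prod_cons]
    rw [← mul_assoc, hp j, mul_assoc, ih, ← mul_assoc]

lemma swapAdj_swapAdj (i j : ℕ) : swapAdj i (swapAdj i j) = j :=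
  Equiv.swap_apply_self i (i+1) j

lemma range_split_two (i K : ℕ) (hK : i + 2 ≤ K) :
    List.range K = List.range' 0 i ++ (i :: (i+1) :: List.range' (i+2) (K - (i+2))) := by
  rw [List.range_eq_range']
  have h1 := List.range'_append (s := 0) (m := i) (n := K - i) (step := 1)
  rw [show 0 + 1 * i = i by omega, show i + (K - i) = K by omega] at h1
  rw [← h1]
  congr 1
  rw [show K - i = (K - i - 1) + 1 by omega, List.range'_succ,
    show K - i - 1 = (K - (i+2)) + 1 by omega, List.range'_succ]

lemma range_split_one (i K : ℕ) (hK : i + 1 ≤ K) :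
    List.range K = List.range' 0 i ++ (i :: List.range' (i+1) (K - (i+1))) := by
  rw [List.range_eq_range']
  have h1 := List.range'_append (s := 0) (m := i) (n := K - i) (step := 1)
  rw [show 0 + 1 * i = i by omega, show i + (K - i) = K by omega] at h1
  rw [← h1]
  congr 1
  rw [show K - i = (K - (i+1)) + 1 by omega, List.range'_succ]

lemma prod_range_swapAdj (h : ℕ → Ev0H) (i K : ℕ) (hK : i + 2 ≤ K)
    (hc : h i * h (i+1) = h (i+1) * h i) :
    ((List.range K).map (fun j => h (swapAdj i j))).prod = ((List.range K).map h).prod := by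
  rw [range_split_two i K hK]
  simp only [List.map_append, List.prod_append, List.map_cons, List.prod_cons]
  have e0 : ∀ j ∈ List.range' 0 i, h (swapAdj i j) = h j := by
    intro j hj
    rw [List.mem_range'_1] at hj
    rw [swapAdj_apply, if_neg (by omega), if_neg (by omega)]
  have e2 : ∀ j ∈ List.range' (i+2) (K - (i+2)), h (swapAdj i j) = h j := by
    intro j hj
    rw [List.mem_range'_1] at hj
    rw [swapAdj_apply, if_neg (by omega), if_neg (by omega)]
  rw [List.map_congr_left e0, List.map_congr_left e2,
    show swapAdj i i = i + 1 by rw [swapAdj_apply, if_pos rfl],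
    show swapAdj i (i+1) = i by rw [swapAdj_apply, if_neg (by omega), if_pos rfl],
    ← mul_assoc (h (i+1)), ← hc, mul_assoc]

lemma equivMap_apply (u : ℕ →₀ List Bool) (i j : ℕ) :
    (Finsupp.equivMapDomain (swapAdj i) u) j = u (swapAdj i j) := by
  rw [Finsupp.equivMapDomain_apply, swapAdj_symm]

lemma eT_mul_uProd (u : ℕ →₀ List Bool) (i K : ℕ) (hK : i + 2 ≤ K) :
    eT i * uProd u K = uProd (Finsupp.equivMapDomain (swapAdj i) u) K * eT i := by
  set u' := Finsupp.equivMapDomain (swapAdj i) u with hu'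
  have step1 : eT i * uProd u K
      = ((List.range K).map (fun j => ewordElem (swapAdj i j) (u j))).prod * eT i :=
    pass_prod (eT i) _ _ (fun j => t_conj_word i j (u j)) (List.range K)
  have hfun : (fun j => ewordElem (swapAdj i j) (u j))
      = (fun j => (fun j' => ewordElem j' (u' j')) (swapAdj i j)) := by
    funext j
    have : u' (swapAdj i j) = u j := by rw [hu', equivMap_apply, swapAdj_swapAdj]
    simp only [this]
  rw [step1, hfun, prod_range_swapAdj (fun j' => ewordElem j' (u' j')) i K hK
    (word_comm (by omega) _ _)]
  rfl

lemma support_bound_equiv (u : ℕ →₀ List Bool) (i : ℕ) :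
    (Finsupp.equivMapDomain (swapAdj i) u).support.sup id + 1
      ≤ max (u.support.sup id + 1) (i+2) := by
  have h : ∀ m ∈ (Finsupp.equivMapDomain (swapAdj i) u).support,
      id m ≤ max (u.support.sup id) (i+1) := by
    intro m hm
    rw [Finsupp.mem_support_iff, equivMap_apply] at hm
    have hmem : swapAdj i m ∈ u.support := Finsupp.mem_support_iff.mpr hm
    have hs := Finset.le_sup (f := id) hmem
    simp only [id_eq] at hs ⊢
    rw [swapAdj_apply] at hs
    split_ifs at hs <;> omega
  have := Finset.sup_le h
  omega

lemma support_bound_update (u : ℕ →₀ List Bool) (i : ℕ) (b : Bool) :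
    (u.update i (b :: u i)).support.sup id + 1 ≤ max (u.support.sup id + 1) (i+1) := by
  have h : ∀ m ∈ (u.update i (b :: u i)).support, id m ≤ max (u.support.sup id) i := by
    intro m hm
    rw [Finsupp.mem_support_iff] at hm
    simp only [id_eq]
    by_cases hmi : m = i
    · omega
    · rw [Finsupp.coe_update, Function.update_apply, if_neg hmi] at hm
      have := Finset.le_sup (f := id) (Finsupp.mem_support_iff.mpr hm)
      simp only [id_eq] at this
      omega
  have := Finset.sup_le h
  omega

lemma eletter_as_word (i : ℕ) (b : Bool) : eletterElem i b = ewordElem i [b] := by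
  rw [ewordElem_cons, ewordElem_nil, mul_one]

lemma eletter_comm_block (i : ℕ) (b : Bool) (u : ℕ →₀ List Bool) (l : List ℕ)
    (hl : ∀ j ∈ l, j ≠ i) :
    eletterElem i b * (l.map (fun j => ewordElem j (u j))).prod
      = (l.map (fun j => ewordElem j (u j))).prod * eletterElem i b := by
  induction l with
  | nil => simp
  | cons j l ih =>
    simp only [List.map_cons, List.prod_cons]
    have hcomm1 : eletterElem i b * ewordElem j (u j)
        = ewordElem j (u j) * eletterElem i b := by
      rw [eletter_as_word, word_comm (Ne.symm (hl j (List.mem_cons_self)))]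
    rw [← mul_assoc, hcomm1, mul_assoc,
      ih (fun j' hj' => hl j' (List.mem_cons_of_mem _ hj')), ← mul_assoc]

lemma eletter_mul_uProd (u : ℕ →₀ List Bool) (i K : ℕ) (b : Bool) (hK : i + 1 ≤ K) :
    eletterElem i b * uProd u K = uProd (u.update i (b :: u i)) K := by
  set u'' := u.update i (b :: u i) with hu''
  have happ : ∀ j, j ≠ i → u'' j = u j := by
    intro j hj
    rw [hu'', Finsupp.coe_update, Function.update_apply, if_neg hj]
  have happi : u'' i = b :: u i := by
    rw [hu'', Finsupp.coe_update, Function.update_apply, if_pos rfl]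
  have hsplit := range_split_one i K hK
  show eletterElem i b * ((List.range K).map (fun j => ewordElem j (u j))).prod
    = ((List.range K).map (fun j => ewordElem j (u'' j))).prod
  rw [hsplit]
  simp only [List.map_append, List.prod_append, List.map_cons, List.prod_cons]
  have e0 : ∀ j ∈ List.range' 0 i, ewordElem j (u'' j) = ewordElem j (u j) := by
    intro j hj
    rw [List.mem_range'_1] at hj
    rw [happ j (by omega)]
  have e2 : ∀ j ∈ List.range' (i+1) (K - (i+1)), ewordElem j (u'' j) = ewordElem j (u j) := by
    intro j hj
    rw [List.mem_range'_1] at hj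
    rw [happ j (by omega)]
  rw [List.map_congr_left e0, List.map_congr_left e2, happi,
    ← mul_assoc, eletter_comm_block i b u _ (fun j hj => by
      rw [List.mem_range'_1] at hj; omega),
    mul_assoc, ← mul_assoc (eletterElem i b), ← ewordElem_cons]

noncomputable def finperm_one : FinPerm := ⟨1, by
  have h : {i : ℕ | (1 : Equiv.Perm ℕ) i ≠ i} = ∅ := by
    ext k
    simp
  rw [h]
  exact Set.finite_empty⟩

noncomputable def finperm_mulAdj (i : ℕ) (w : FinPerm) : FinPerm :=
  ⟨swapAdj i * w.1, by
    apply Set.Finite.subset (w.2.union ((Set.finite_singleton (i+1)).insert i))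
    intro k hk
    simp only [Set.mem_setOf_eq, Equiv.Perm.mul_apply] at hk
    simp only [Set.mem_union, Set.mem_setOf_eq, Set.mem_insert_iff, Set.mem_singleton_iff]
    by_contra hcon
    push_neg at hcon
    obtain ⟨h1, h2, h3⟩ := hcon
    rw [h1, swapAdj_apply, if_neg h2, if_neg h3] at hk
    exact hk rfl⟩

lemma straighten_t (rep : FinPerm → List ℕ) (hrep : ∀ w : FinPerm, wordPerm (rep w) = w.1)
    (u : ℕ →₀ List Bool) (w : FinPerm) (i : ℕ) :
    eT i * stdWord0 rep u w
      = stdWord0 rep (Finsupp.equivMapDomain (swapAdj i) u) (finperm_mulAdj i w) := by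
  set u' := Finsupp.equivMapDomain (swapAdj i) u with hu'
  set K := max (max (u.support.sup id + 1) (u'.support.sup id + 1)) (i+2) with hKdef
  have hK1 : u.support.sup id + 1 ≤ K := by omega
  have hK2 : u'.support.sup id + 1 ≤ K := by omega
  have hK3 : i + 2 ≤ K := by omega
  unfold stdWord0
  rw [(uProd_extend (le_refl (u.support.sup id + 1)) hK1).symm,
    ← mul_assoc, eT_mul_uProd u i K hK3, mul_assoc, ← hu',
    uProd_extend (le_refl (u'.support.sup id + 1)) hK2]
  congr 1
  rw [← tword_cons]
  apply tword_eq_of_wordPerm_eq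
  rw [wordPerm_cons, hrep, hrep]
  rfl

lemma straighten_letter (rep : FinPerm → List ℕ) (u : ℕ →₀ List Bool) (w : FinPerm)
    (i : ℕ) (b : Bool) :
    eletterElem i b * stdWord0 rep u w = stdWord0 rep (u.update i (b :: u i)) w := by
  set u'' := u.update i (b :: u i) with hu''
  set K := max (max (u.support.sup id + 1) (u''.support.sup id + 1)) (i+1) with hKdef
  have hK1 : u.support.sup id + 1 ≤ K := by omega
  have hK2 : u''.support.sup id + 1 ≤ K := by omega
  have hK3 : i + 1 ≤ K := by omega
  unfold stdWord0
  rw [(uProd_extend (le_refl (u.support.sup id + 1)) hK1).symm,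
    ← mul_assoc, eletter_mul_uProd u i K b hK3, ← hu'',
    uProd_extend (le_refl (u''.support.sup id + 1)) hK2]

lemma std_one (rep : FinPerm → List ℕ) (hrep : ∀ w : FinPerm, wordPerm (rep w) = w.1) :
    stdWord0 rep 0 finperm_one = 1 := by
  unfold stdWord0
  have h1 : ∀ k, uProd (0 : ℕ →₀ List Bool) k = 1 := by
    intro k
    induction k with
    | zero => rfl
    | succ k ih =>
      rw [uProd_succ, ih, one_mul, Finsupp.coe_zero, Pi.zero_apply, ewordElem_zero]
  have h2 : tword (rep finperm_one) = 1 := by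
    have := tword_eq_of_wordPerm_eq (l := rep finperm_one) (l' := [])
      (by rw [hrep, wordPerm_nil]; rfl)
    rwa [tword_nil] at this
  rw [h1, h2, one_mul]

theorem span_eq_top (rep : FinPerm → List ℕ) (hrep : ∀ w : FinPerm, wordPerm (rep w) = w.1) :
    Submodule.span ℚ
      (Set.range (fun p : (ℕ →₀ List Bool) × FinPerm => stdWord0 rep p.1 p.2)) = ⊤ := by
  set fam := fun p : (ℕ →₀ List Bool) × FinPerm => stdWord0 rep p.1 p.2 with hfam
  set Sp := Submodule.span ℚ (Set.range fam) with hSp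
  have hone : (1 : Ev0H) ∈ Sp := by
    apply Submodule.subset_span
    exact ⟨(0, finperm_one), std_one rep hrep⟩
  have himg : ∀ (g : EGen) (p : (ℕ →₀ List Bool) × FinPerm),
      egen g * fam p ∈ Set.range fam := by
    intro g p
    cases g with
    | t i => exact ⟨(Finsupp.equivMapDomain (swapAdj i) p.1, finperm_mulAdj i p.2),
        (straighten_t rep hrep p.1 p.2 i).symm⟩
    | x i => exact ⟨(p.1.update i (true :: p.1 i), p.2),
        (straighten_letter rep p.1 p.2 i true).symm⟩
    | y i => exact ⟨(p.1.update i (false :: p.1 i), p.2),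
        (straighten_letter rep p.1 p.2 i false).symm⟩
  have key : ∀ a : FreeAlgebra ℚ EGen, ∀ z ∈ Sp, RingQuot.mkAlgHom ℚ ERel a * z ∈ Sp := by
    intro a
    induction a using FreeAlgebra.induction with
    | grade0 r =>
      intro z hz
      rw [AlgHom.commutes, ← Algebra.smul_def]
      exact Submodule.smul_mem _ r hz
    | grade1 g =>
      intro z hz
      have hmap : Sp.map (LinearMap.mulLeft ℚ (egen g)) ≤ Sp := by
        rw [hSp, Submodule.map_span, Submodule.span_le]
        rintro _ ⟨_, ⟨p, rfl⟩, rfl⟩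
        rw [LinearMap.mulLeft_apply]
        exact Submodule.subset_span (himg g p)
      exact hmap ⟨z, hz, rfl⟩
    | mul a b iha ihb =>
      intro z hz
      rw [map_mul, mul_assoc]
      exact iha _ (ihb z hz)
    | add a b iha ihb =>
      intro z hz
      rw [map_add, add_mul]
      exact Submodule.add_mem _ (iha z hz) (ihb z hz)
  rw [eq_top_iff]
  rintro v -
  obtain ⟨a, rfl⟩ := RingQuot.mkAlgHom_surjective ℚ ERel v
  have := key a 1 hone
  rwa [mul_one] at this

end Ev0Span

namespace Ev0Model

open CoxAux Ev0Span

/-- pointwise concatenation of finitely supported word families. -/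
noncomputable def uadd (u v : ℕ →₀ List Bool) : ℕ →₀ List Bool :=
  Finsupp.zipWith (· ++ ·) rfl u v

lemma uadd_apply (u v : ℕ →₀ List Bool) (m : ℕ) : uadd u v m = u m ++ v m :=
  Finsupp.zipWith_apply

lemma zero_list : (0 : List Bool) = [] := rfl

lemma uadd_zero (u : ℕ →₀ List Bool) : uadd u 0 = u := by
  apply Finsupp.ext
  intro m
  rw [uadd_apply, Finsupp.zero_apply, zero_list, List.append_nil]

lemma zero_uadd (u : ℕ →₀ List Bool) : uadd 0 u = u := by
  apply Finsupp.ext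
  intro m
  rw [uadd_apply, Finsupp.zero_apply, zero_list, List.nil_append]

lemma uadd_assoc (u v w : ℕ →₀ List Bool) : uadd (uadd u v) w = uadd u (uadd v w) := by
  apply Finsupp.ext
  intro m
  simp only [uadd_apply, List.append_assoc]

lemma uadd_single_same (i : ℕ) (a c : List Bool) :
    uadd (Finsupp.single i a) (Finsupp.single i c) = Finsupp.single i (a ++ c) := by
  apply Finsupp.ext
  intro m
  simp only [uadd_apply, Finsupp.single_apply]
  split_ifs <;> simp [zero_list]

lemma uadd_single_comm {i j : ℕ} (h : i ≠ j) (a c : List Bool) :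
    uadd (Finsupp.single i a) (Finsupp.single j c)
      = uadd (Finsupp.single j c) (Finsupp.single i a) := by
  apply Finsupp.ext
  intro m
  simp only [uadd_apply, Finsupp.single_apply]
  split_ifs <;> first | rfl | omega | simp [zero_list]

/-- Permutation action on finitely supported word families. -/
noncomputable def pe (σ : Equiv.Perm ℕ) (u : ℕ →₀ List Bool) : ℕ →₀ List Bool :=
  Finsupp.equivMapDomain σ u

lemma pe_apply (σ : Equiv.Perm ℕ) (u : ℕ →₀ List Bool) (m : ℕ) :
    pe σ u m = u (σ.symm m) := Finsupp.equivMapDomain_apply σ u m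

lemma pe_zero (σ : Equiv.Perm ℕ) : pe σ 0 = 0 := by
  apply Finsupp.ext
  intro m
  rw [pe_apply, Finsupp.zero_apply, Finsupp.zero_apply]

lemma pe_one (u : ℕ →₀ List Bool) : pe 1 u = u := by
  apply Finsupp.ext
  intro m
  rw [pe_apply]
  rfl

lemma pe_mul (σ τ : Equiv.Perm ℕ) (u : ℕ →₀ List Bool) :
    pe (σ * τ) u = pe σ (pe τ u) := by
  apply Finsupp.ext
  intro m
  rw [pe_apply, pe_apply, pe_apply]
  rfl

lemma pe_uadd (σ : Equiv.Perm ℕ) (u v : ℕ →₀ List Bool) :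
    pe σ (uadd u v) = uadd (pe σ u) (pe σ v) := by
  apply Finsupp.ext
  intro m
  rw [pe_apply, uadd_apply, uadd_apply, pe_apply, pe_apply]

lemma pe_single (σ : Equiv.Perm ℕ) (i : ℕ) (a : List Bool) :
    pe σ (Finsupp.single i a) = Finsupp.single (σ i) a :=
  Finsupp.equivMapDomain_single σ i a

/-- The model monoid: a crossed product of word families with permutations. -/
structure PMon where
  u : ℕ →₀ List Bool
  w : Equiv.Perm ℕ

lemma PMon.ext' {p q : PMon} (h1 : p.u = q.u) (h2 : p.w = q.w) : p = q := by
  cases p; cases q; cases h1; cases h2; rfl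

noncomputable instance : Monoid PMon where
  one := ⟨0, 1⟩
  mul p q := ⟨uadd p.u (pe p.w q.u), p.w * q.w⟩
  mul_assoc p q r := by
    apply PMon.ext'
    · show uadd (uadd p.u (pe p.w q.u)) (pe (p.w * q.w) r.u)
        = uadd p.u (pe p.w (uadd q.u (pe q.w r.u)))
      rw [pe_uadd, ← pe_mul, uadd_assoc]
    · exact mul_assoc p.w q.w r.w
  one_mul p := by
    apply PMon.ext'
    · show uadd 0 (pe 1 p.u) = p.u
      rw [pe_one, zero_uadd]
    · exact one_mul p.w
  mul_one p := by
    apply PMon.ext'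
    · show uadd p.u (pe p.w 0) = p.u
      rw [pe_zero, uadd_zero]
    · exact mul_one p.w

lemma pm_mul (u v : ℕ →₀ List Bool) (σ τ : Equiv.Perm ℕ) :
    (⟨u, σ⟩ : PMon) * ⟨v, τ⟩ = ⟨uadd u (pe σ v), σ * τ⟩ := rfl

lemma pm_one : (1 : PMon) = ⟨0, 1⟩ := rfl

/-- The model algebra. -/
abbrev Cmod : Type := MonoidAlgebra ℚ PMon

/-- images of the generators in the model. -/
noncomputable def gm : EGen → Cmod
  | EGen.t i => MonoidAlgebra.single ⟨0, swapAdj i⟩ 1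
  | EGen.x i => MonoidAlgebra.single ⟨Finsupp.single i [true], 1⟩ 1
  | EGen.y i => MonoidAlgebra.single ⟨Finsupp.single i [false], 1⟩ 1

lemma swapAdj_mul_self (i : ℕ) : swapAdj i * swapAdj i = 1 := Equiv.swap_mul_self _ _

lemma swapAdj_comm {i j : ℕ} (h : i + 1 < j ∨ j + 1 < i) :
    swapAdj i * swapAdj j = swapAdj j * swapAdj i := by
  ext x
  simp only [Equiv.Perm.mul_apply, swapAdj_apply]
  rcases h with h | h <;> split_ifs <;> omega

set_option maxHeartbeats 1600000 in
lemma swapAdj_braid (i : ℕ) :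
    swapAdj i * swapAdj (i+1) * swapAdj i = swapAdj (i+1) * swapAdj i * swapAdj (i+1) := by
  ext x
  simp only [Equiv.Perm.mul_apply, swapAdj_apply]
  split_ifs <;> omega

lemma swapAdj_left (i : ℕ) : swapAdj i i = i + 1 := by
  rw [swapAdj_apply, if_pos rfl]

lemma swapAdj_right (i : ℕ) : swapAdj i (i+1) = i := by
  rw [swapAdj_apply, if_neg (by omega), if_pos rfl]

lemma sms (a b : PMon) (r s : ℚ) :
    (MonoidAlgebra.single a r : Cmod) * MonoidAlgebra.single b s
      = MonoidAlgebra.single (a * b) (r * s) := MonoidAlgebra.single_mul_single a b r s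

lemma cmod_one : (1 : Cmod) = MonoidAlgebra.single 1 1 := rfl

lemma hrel : ∀ ⦃x y : FreeAlgebra ℚ EGen⦄, ERel x y →
    (FreeAlgebra.lift ℚ gm) x = (FreeAlgebra.lift ℚ gm) y := by
  intro x y h
  induction h with
  | tt i =>
    simp only [map_mul, map_one, FreeAlgebra.lift_ι_apply, gm, sms, pm_mul, pe_zero,
      pe_one, pe_single, Equiv.Perm.one_apply, uadd_zero, zero_uadd, one_mul, mul_one, swapAdj_mul_self]
    rw [← pm_one, ← cmod_one]
  | tcomm i j hij =>
    simp only [map_mul, FreeAlgebra.lift_ι_apply, gm, sms, pm_mul, pe_zero,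
      pe_one, pe_single, Equiv.Perm.one_apply, uadd_zero, zero_uadd, one_mul, mul_one]
    rw [swapAdj_comm hij]
  | braid i =>
    simp only [map_mul, FreeAlgebra.lift_ι_apply, gm, sms, pm_mul, pe_zero,
      pe_one, pe_single, Equiv.Perm.one_apply, uadd_zero, zero_uadd, one_mul, mul_one]
    rw [swapAdj_braid]
  | txt i =>
    simp only [map_mul, FreeAlgebra.lift_ι_apply, gm, sms, pm_mul, pe_zero,
      pe_one, pe_single, Equiv.Perm.one_apply, uadd_zero, zero_uadd, one_mul, mul_one, swapAdj_mul_self,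
      swapAdj_left]
  | tx i j h1 h2 =>
    simp only [map_mul, FreeAlgebra.lift_ι_apply, gm, sms, pm_mul, pe_zero,
      pe_one, pe_single, Equiv.Perm.one_apply, uadd_zero, zero_uadd, one_mul, mul_one]
    rw [show swapAdj i j = j by rw [swapAdj_apply, if_neg h1, if_neg h2]]
  | xx i j =>
    by_cases hij : i = j
    · subst hij; rfl
    · simp only [map_mul, FreeAlgebra.lift_ι_apply, gm, sms, pm_mul, pe_zero,
        pe_one, pe_single, Equiv.Perm.one_apply, uadd_zero, zero_uadd, one_mul, mul_one]
      rw [uadd_single_comm hij]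
  | tyt i =>
    simp only [map_mul, FreeAlgebra.lift_ι_apply, gm, sms, pm_mul, pe_zero,
      pe_one, pe_single, Equiv.Perm.one_apply, uadd_zero, zero_uadd, one_mul, mul_one, swapAdj_mul_self,
      swapAdj_left]
  | ty i j h1 h2 =>
    simp only [map_mul, FreeAlgebra.lift_ι_apply, gm, sms, pm_mul, pe_zero,
      pe_one, pe_single, Equiv.Perm.one_apply, uadd_zero, zero_uadd, one_mul, mul_one]
    rw [show swapAdj i j = j by rw [swapAdj_apply, if_neg h1, if_neg h2]]
  | yy i j =>
    by_cases hij : i = j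
    · subst hij; rfl
    · simp only [map_mul, FreeAlgebra.lift_ι_apply, gm, sms, pm_mul, pe_zero,
        pe_one, pe_single, Equiv.Perm.one_apply, uadd_zero, zero_uadd, one_mul, mul_one]
      rw [uadd_single_comm hij]
  | cross =>
    simp only [map_mul, FreeAlgebra.lift_ι_apply, gm, sms, pm_mul, pe_zero,
      pe_one, pe_single, Equiv.Perm.one_apply, uadd_zero, zero_uadd, one_mul, mul_one, swapAdj_left,
      Nat.zero_add]
    rw [uadd_single_comm (show (0:ℕ) ≠ 1 by omega)]

/-- The comparison map to the model. -/
noncomputable def Φ : Ev0H →ₐ[ℚ] Cmod :=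
  RingQuot.liftAlgHom ℚ ⟨FreeAlgebra.lift ℚ gm, hrel⟩

lemma Φ_egen (g : EGen) : Φ (egen g) = gm g := by
  rw [egen, Φ, RingQuot.liftAlgHom_mkAlgHom_apply, FreeAlgebra.lift_ι_apply]

lemma Φ_eletter (i : ℕ) (b : Bool) :
    Φ (eletterElem i b) = MonoidAlgebra.single ⟨Finsupp.single i [b], 1⟩ 1 := by
  cases b
  · rw [eletter_y]
    show Φ (egen (EGen.y i)) = _
    rw [Φ_egen]
    rfl
  · rw [eletter_x]
    show Φ (egen (EGen.x i)) = _
    rw [Φ_egen]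
    rfl

lemma Φ_eword (i : ℕ) (v : List Bool) :
    Φ (ewordElem i v) = MonoidAlgebra.single ⟨Finsupp.single i v, 1⟩ 1 := by
  induction v with
  | nil =>
    rw [ewordElem_nil, map_one, show ([] : List Bool) = 0 from rfl, Finsupp.single_zero]
    rfl
  | cons b v ih =>
    rw [ewordElem_cons, map_mul, ih, Φ_eletter, sms, pm_mul, pe_one, mul_one,
      uadd_single_same, one_mul]
    rfl

/-- partial sums of singles. -/
noncomputable def usum (u : ℕ →₀ List Bool) : ℕ → (ℕ →₀ List Bool)
  | 0 => 0
  | (k+1) => uadd (usum u k) (Finsupp.single k (u k))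

lemma usum_apply (u : ℕ →₀ List Bool) (k m : ℕ) :
    usum u k m = if m < k then u m else 0 := by
  induction k with
  | zero =>
    rw [show usum u 0 = 0 from rfl, Finsupp.zero_apply]
    split_ifs <;> first | omega | rfl
  | succ k ih =>
    rw [show usum u (k+1) = uadd (usum u k) (Finsupp.single k (u k)) from rfl,
      uadd_apply, ih, Finsupp.single_apply]
    split_ifs <;> first | omega | (subst_vars; simp [zero_list])

lemma usum_eq {u : ℕ →₀ List Bool} {k : ℕ} (h : ∀ m, k ≤ m → u m = 0) :
    usum u k = u := by
  apply Finsupp.ext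
  intro m
  rw [usum_apply]
  split_ifs with hm
  · rfl
  · exact (h m (by omega)).symm

lemma Φ_uProd (u : ℕ →₀ List Bool) (k : ℕ) :
    Φ (uProd u k) = MonoidAlgebra.single ⟨usum u k, 1⟩ 1 := by
  induction k with
  | zero => rw [uProd_zero_len, map_one]; rfl
  | succ k ih =>
    rw [uProd_succ, map_mul, ih, Φ_eword, sms, pm_mul, pe_one, mul_one, one_mul]
    rfl

lemma Φ_tword (l : List ℕ) :
    Φ (tword l) = MonoidAlgebra.single ⟨0, wordPerm l⟩ 1 := by
  induction l with
  | nil => rw [tword_nil, map_one, wordPerm_nil]; rfl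
  | cons i l ih =>
    rw [tword_cons, map_mul, ih, show Φ (eT i) = gm (EGen.t i) from Φ_egen _,
      show gm (EGen.t i) = MonoidAlgebra.single ⟨0, swapAdj i⟩ 1 from rfl, sms, pm_mul,
      pe_zero, uadd_zero, mul_one, wordPerm_cons]

lemma Φ_std (rep : FinPerm → List ℕ) (hrep : ∀ w : FinPerm, wordPerm (rep w) = w.1)
    (u : ℕ →₀ List Bool) (w : FinPerm) :
    Φ (stdWord0 rep u w) = MonoidAlgebra.single ⟨u, w.1⟩ 1 := by
  unfold stdWord0
  rw [map_mul, Φ_uProd, Φ_tword, sms, pm_mul, pe_zero, uadd_zero, mul_one, hrep,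
    usum_eq (fun m hm => apply_eq_nil hm), one_mul]

end Ev0Model

namespace Ev0Model

/-- index embedding into the model monoid. -/
def emb (p : (ℕ →₀ List Bool) × FinPerm) : PMon := ⟨p.1, p.2.1⟩

lemma emb_injective : Function.Injective emb := by
  intro p q h
  have h1 : p.1 = q.1 := congrArg PMon.u h
  have h2 : p.2.1 = q.2.1 := congrArg PMon.w h
  exact Prod.ext h1 (Subtype.ext h2)

lemma single_linearIndependent :
    LinearIndependent ℚ (fun q : PMon => (MonoidAlgebra.single q (1:ℚ) : Cmod)) := by
  have h := (MonoidAlgebra.basis PMon ℚ).linearIndependent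
  convert h using 1
  funext q
  exact (MonoidAlgebra.basis_apply ℚ q).symm

theorem std_linearIndependent (rep : FinPerm → List ℕ)
    (hrep : ∀ w : FinPerm, wordPerm (rep w) = w.1) :
    LinearIndependent ℚ
      (fun p : (ℕ →₀ List Bool) × FinPerm => stdWord0 rep p.1 p.2) := by
  apply LinearIndependent.of_comp (Φ.toLinearMap)
  have heq : (⇑Φ.toLinearMap ∘ fun p : (ℕ →₀ List Bool) × FinPerm => stdWord0 rep p.1 p.2)
      = fun p => MonoidAlgebra.single (emb p) (1:ℚ) := by
    funext p
    exact Φ_std rep hrep p.1 p.2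
  rw [heq]
  exact single_linearIndependent.comp emb emb_injective

end Ev0Model

/-- The family `u₁ u₂ ⋯ u_k t_w`, indexed without repetition by pairs `(u, w)` with `u` a
finitely supported assignment of a word in `{x_i, y_i}` to each `i` and `w` a finitary
permutation, is a `ℚ`-vector-space basis of `ev₀(H⁺)`: it is linearly independent and spans.
Here `rep` is any choice of expression of each `w` as a product of adjacent transpositions
(`t_w` does not depend on this choice). -/
theorem statement3 (rep : FinPerm → List ℕ)
    (hrep : ∀ w : FinPerm, wordPerm (rep w) = w.1) :
    LinearIndependent ℚ
        (fun p : (ℕ →₀ List Bool) × FinPerm => stdWord0 rep p.1 p.2) ∧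
      Submodule.span ℚ
        (Set.range (fun p : (ℕ →₀ List Bool) × FinPerm => stdWord0 rep p.1 p.2)) = ⊤ :=
  ⟨Ev0Model.std_linearIndependent rep hrep, Ev0Span.span_eq_top rep hrep⟩

end
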